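/- Gagliardo–Nirenberg inequality in dimension 2: there exists a constant C such that for all f in H¹(ℝ²), ‖f‖_{L⁴(ℝ²)} ≤ C ‖f‖_{L²(ℝ²)}^{1/2} ‖∇f‖_{L²(ℝ²)}^{1/2}. -/

import Mathlib

open MeasureTheory ENNReal NNReal Metric Filter

noncomputable section

local notation "E2" => EuclideanSpace ℝ (Fin 2)

def GNC : ℝ≥0 := eLpNormLESNormFDerivOneConst (volume : Measure (EuclideanSpace ℝ (Fin 2))) 2

lemma gn_sq_bound (g : E2 → ℝ) (hg : ContDiff ℝ 1 g) (h2g : HasCompactSupport g) :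
    eLpNorm g 4 volume ^ (2:ℝ) ≤
      2 * (GNC : ℝ≥0∞) * eLpNorm g 2 volume * eLpNorm (fun x => ‖fderiv ℝ g x‖) 2 volume := by
  set u : E2 → ℝ := fun x => g x * g x with hu_def
  have hu : ContDiff ℝ 1 u := hg.mul hg
  have h2u : HasCompactSupport u := h2g.mul_right
  have hp : NNReal.HolderConjugate (Module.finrank ℝ E2) 2 := by
    rw [finrank_euclideanSpace_fin]
    exact ⟨by rw [← NNReal.coe_inj]; push_cast; norm_num, by norm_num, by norm_num⟩
  have key := eLpNorm_le_eLpNorm_fderiv_one (volume : Measure E2) hu h2u hp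
  -- identify eLpNorm u 2 with eLpNorm g 4 ^ 2
  have h4 : eLpNorm u 2 volume = eLpNorm g 4 volume ^ (2:ℝ) := by
    rw [eLpNorm_eq_lintegral_rpow_enorm_toReal two_ne_zero (by norm_num),
      eLpNorm_eq_lintegral_rpow_enorm_toReal (by norm_num) (by norm_num),
      ← ENNReal.rpow_mul]
    have htr2 : (2 : ℝ≥0∞).toReal = 2 := by norm_num
    have htr4 : (4 : ℝ≥0∞).toReal = 4 := by norm_num
    rw [htr2, htr4]
    have heq : ∀ x, ((‖u x‖₊ : ℝ≥0∞)) ^ (2:ℝ) = ((‖g x‖₊ : ℝ≥0∞)) ^ (4:ℝ) := by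
      intro x
      have h1 : ‖u x‖₊ = ‖g x‖₊ * ‖g x‖₊ := nnnorm_mul _ _
      rw [h1, ENNReal.coe_mul, ENNReal.mul_rpow_of_nonneg _ _ (by norm_num : (0:ℝ) ≤ 2),
        show (4:ℝ) = 2 + 2 by norm_num,
        ENNReal.rpow_add_of_nonneg _ _ (by norm_num) (by norm_num)]
    simp only [enorm_eq_nnnorm]
    simp_rw [heq]
    norm_num
  -- pointwise bound on the derivative of u
  have hdg := hg.differentiable one_ne_zero
  have hdu : ∀ x, (‖fderiv ℝ u x‖₊ : ℝ≥0∞) ≤ 2 * ‖g x‖₊ * ‖fderiv ℝ g x‖₊ := by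
    intro x
    have hfd : fderiv ℝ u x = g x • fderiv ℝ g x + g x • fderiv ℝ g x :=
      fderiv_fun_mul (hdg x) (hdg x)
    calc (‖fderiv ℝ u x‖₊ : ℝ≥0∞)
        ≤ (‖g x • fderiv ℝ g x‖₊ : ℝ≥0∞) + ‖g x • fderiv ℝ g x‖₊ := by
          rw [hfd]; exact_mod_cast nnnorm_add_le _ _
      _ = 2 * ‖g x‖₊ * ‖fderiv ℝ g x‖₊ := by
          rw [nnnorm_smul]; push_cast; ring
  have hmg : AEMeasurable (fun x => ((‖g x‖₊ : ℝ≥0∞))) volume :=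
    hg.continuous.measurable.enorm.aemeasurable
  have hdc : Continuous (fderiv ℝ g) := hg.continuous_fderiv one_ne_zero
  have hmd : AEMeasurable (fun x => ((‖fderiv ℝ g x‖₊ : ℝ≥0∞))) volume :=
    hdc.measurable.enorm.aemeasurable
  have hpq : Real.HolderConjugate 2 2 := ⟨by norm_num, by norm_num, by norm_num⟩
  have holder := ENNReal.lintegral_mul_le_Lp_mul_Lq volume hpq hmg hmd
  have hS : eLpNorm g 2 volume = (∫⁻ x, (‖g x‖₊ : ℝ≥0∞) ^ (2:ℝ)) ^ (1/2 : ℝ) := by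
    rw [eLpNorm_eq_lintegral_rpow_enorm_toReal two_ne_zero (by norm_num)]
    simp only [enorm_eq_nnnorm]
    norm_num
  have hD : eLpNorm (fun x => ‖fderiv ℝ g x‖) 2 volume
      = (∫⁻ x, (‖fderiv ℝ g x‖₊ : ℝ≥0∞) ^ (2:ℝ)) ^ (1/2 : ℝ) := by
    rw [eLpNorm_eq_lintegral_rpow_enorm_toReal two_ne_zero (by norm_num)]
    simp_rw [enorm_eq_nnnorm, nnnorm_norm]
    norm_num
  have hd1 : eLpNorm (fderiv ℝ u) 1 volume
      ≤ 2 * eLpNorm g 2 volume * eLpNorm (fun x => ‖fderiv ℝ g x‖) 2 volume := by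
    rw [eLpNorm_one_eq_lintegral_enorm, hS, hD]
    calc ∫⁻ x, (‖fderiv ℝ u x‖₊ : ℝ≥0∞)
        ≤ ∫⁻ x, 2 * ‖g x‖₊ * ‖fderiv ℝ g x‖₊ := lintegral_mono hdu
      _ = 2 * ∫⁻ x, (‖g x‖₊ : ℝ≥0∞) * ‖fderiv ℝ g x‖₊ := by
          simp_rw [mul_assoc]
          rw [lintegral_const_mul' _ _ (by norm_num)]
      _ ≤ 2 * ((∫⁻ x, (‖g x‖₊ : ℝ≥0∞) ^ (2:ℝ)) ^ (1/2 : ℝ)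
            * (∫⁻ x, (‖fderiv ℝ g x‖₊ : ℝ≥0∞) ^ (2:ℝ)) ^ (1/2 : ℝ)) := by
          gcongr
          exact holder
      _ = 2 * (∫⁻ x, (‖g x‖₊ : ℝ≥0∞) ^ (2:ℝ)) ^ (1/2 : ℝ)
            * (∫⁻ x, (‖fderiv ℝ g x‖₊ : ℝ≥0∞) ^ (2:ℝ)) ^ (1/2 : ℝ) := by ring
  have hC : (↑(eLpNormLESNormFDerivOneConst (volume : Measure E2) ((2:ℝ≥0):ℝ)) : ℝ≥0∞)
      = (GNC : ℝ≥0∞) := by norm_num [GNC]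
  have hp2 : ((2:ℝ≥0) : ℝ≥0∞) = (2 : ℝ≥0∞) := by norm_cast
  rw [hp2, hC, h4] at key
  calc eLpNorm g 4 volume ^ (2:ℝ)
      ≤ (GNC : ℝ≥0∞) * eLpNorm (fderiv ℝ u) 1 volume := key
    _ ≤ (GNC : ℝ≥0∞) * (2 * eLpNorm g 2 volume
          * eLpNorm (fun x => ‖fderiv ℝ g x‖) 2 volume) := by gcongr
    _ = 2 * (GNC : ℝ≥0∞) * eLpNorm g 2 volume
          * eLpNorm (fun x => ‖fderiv ℝ g x‖) 2 volume := by ring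


def gnBump : ContDiffBump (0 : EuclideanSpace ℝ (Fin 2)) := ⟨1, 2, one_pos, one_lt_two⟩

def gnChi (n : ℕ) : E2 → ℝ := fun x => gnBump ((((n:ℝ)+1))⁻¹ • x)

lemma gnChi_contDiff (n : ℕ) : ContDiff ℝ 1 (gnChi n) :=
  (gnBump.contDiff (n := 1)).comp (contDiff_id.const_smul _)

lemma gnChi_one {n : ℕ} {x : E2} (h : ‖x‖ ≤ (n:ℝ)+1) : gnChi n x = 1 := by
  apply gnBump.one_of_mem_closedBall
  rw [mem_closedBall_zero_iff, norm_smul, norm_inv, Real.norm_eq_abs,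
    abs_of_pos (by positivity : (0:ℝ) < (n:ℝ)+1)]
  show ((n:ℝ)+1)⁻¹ * ‖x‖ ≤ gnBump.rIn
  have : gnBump.rIn = 1 := rfl
  rw [this, inv_mul_le_iff₀ (by positivity), mul_one]
  exact h

lemma gnChi_nonneg (n : ℕ) (x : E2) : 0 ≤ gnChi n x := gnBump.nonneg

lemma gnChi_le_one (n : ℕ) (x : E2) : gnChi n x ≤ 1 := gnBump.le_one

lemma gnChi_supp (n : ℕ) :
    Function.support (gnChi n) ⊆ closedBall 0 (2*((n:ℝ)+1)) := by
  intro x hx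
  have : (((n:ℝ)+1))⁻¹ • x ∈ Function.support (gnBump : E2 → ℝ) := hx
  rw [gnBump.support_eq, mem_ball_zero_iff, norm_smul, norm_inv, Real.norm_eq_abs,
    abs_of_pos (by positivity : (0:ℝ) < (n:ℝ)+1)] at this
  have h2 : gnBump.rOut = 2 := rfl
  rw [h2, inv_mul_lt_iff₀ (by positivity)] at this
  rw [mem_closedBall_zero_iff]
  nlinarith [this]

lemma gnChi_hcs (n : ℕ) : HasCompactSupport (gnChi n) :=
  HasCompactSupport.of_support_subset_isCompact (isCompact_closedBall _ _) (gnChi_supp n)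

lemma gnChi_fderiv_bound : ∃ K : ℝ, 0 ≤ K ∧ ∀ (n : ℕ) (x : E2),
    ‖fderiv ℝ (gnChi n) x‖ ≤ K / ((n:ℝ)+1) := by
  obtain ⟨K₀, hK₀⟩ := (gnBump.hasCompactSupport.fderiv (𝕜 := ℝ)).exists_bound_of_continuous
    ((gnBump.contDiff (n := 1)).continuous_fderiv (by simp))
  have hK₀0 : 0 ≤ K₀ := le_trans (norm_nonneg _) (hK₀ 0)
  refine ⟨K₀, hK₀0, fun n x => ?_⟩
  set c : ℝ := (((n:ℝ)+1))⁻¹ with hc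
  have hc0 : 0 < c := by positivity
  have hdi : DifferentiableAt ℝ (fun y : E2 => c • y) x := (differentiable_id.const_smul c) x
  have hfg : fderiv ℝ (gnChi n) x
      = (fderiv ℝ (gnBump : E2 → ℝ) (c • x)).comp (fderiv ℝ (fun y : E2 => c • y) x) :=
    fderiv_comp x ((gnBump.contDiff (n := 1)).differentiable (by simp) _) hdi
  have hlin : fderiv ℝ (fun y : E2 => c • y) x = c • ContinuousLinearMap.id ℝ E2 := by
    rw [fderiv_fun_const_smul (f := fun y => y) differentiableAt_id c, fderiv_fun_id]
  rw [hfg, hlin]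
  calc ‖(fderiv ℝ (gnBump : E2 → ℝ) (c • x)).comp (c • ContinuousLinearMap.id ℝ E2)‖
      ≤ ‖fderiv ℝ (gnBump : E2 → ℝ) (c • x)‖ * ‖c • ContinuousLinearMap.id ℝ E2‖ :=
        ContinuousLinearMap.opNorm_comp_le _ _
    _ ≤ K₀ * (c * 1) := by
        apply mul_le_mul (hK₀ _) ?_ (norm_nonneg _) hK₀0
        refine le_trans (ContinuousLinearMap.opNorm_smul_le _ _) ?_
        rw [Real.norm_eq_abs, abs_of_pos hc0]
        exact mul_le_mul_of_nonneg_left ContinuousLinearMap.norm_id_le hc0.le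
    _ = K₀ / ((n:ℝ)+1) := by rw [mul_one]; rw [hc]; ring


/-- **Gagliardo–Nirenberg inequality in dimension 2**: there is a constant `C > 0` such that
for all `f ∈ H¹(ℝ²)` (here: `f` differentiable with `f ∈ L²` and `∇f ∈ L²`),
`‖f‖_{L⁴(ℝ²)} ≤ C ‖f‖_{L²(ℝ²)}^{1/2} ‖∇f‖_{L²(ℝ²)}^{1/2}`. -/
theorem gagliardo_nirenberg_2d :
    ∃ C : ℝ≥0∞, 0 < C ∧ C ≠ ∞ ∧
      ∀ f : EuclideanSpace ℝ (Fin 2) → ℝ,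
        ContDiff ℝ 1 f →
        MemLp f 2 volume →
        MemLp (fun x => ‖fderiv ℝ f x‖) 2 volume →
        eLpNorm f 4 volume
          ≤ C * eLpNorm f 2 volume ^ (1/2 : ℝ)
              * eLpNorm (fun x => ‖fderiv ℝ f x‖) 2 volume ^ (1/2 : ℝ) := by
  obtain ⟨K, hK0, hKb⟩ := gnChi_fderiv_bound
  refine ⟨(2 * GNC + 1 : ℝ≥0∞) ^ (1/2 : ℝ), ?_, ?_, ?_⟩
  · exact ENNReal.rpow_pos (lt_of_lt_of_le one_pos le_add_self) (by finiteness)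
  · exact ENNReal.rpow_ne_top_of_nonneg (by norm_num) (by finiteness)
  intro f hf hf2 hdf2
  set N2 := eLpNorm f 2 volume with hN2_def
  set D2 := eLpNorm (fun x => ‖fderiv ℝ f x‖) 2 volume with hD2_def
  have hN2 : N2 ≠ ∞ := hf2.eLpNorm_ne_top
  have hD2 : D2 ≠ ∞ := hdf2.eLpNorm_ne_top
  -- the cutoff approximations
  set g : ℕ → E2 → ℝ := fun n x => gnChi n x * f x with hg_def
  have hgc : ∀ n, ContDiff ℝ 1 (g n) := fun n => (gnChi_contDiff n).mul hf
  have hgs : ∀ n, HasCompactSupport (g n) := fun n => (gnChi_hcs n).mul_right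
  have hg2 : ∀ n, eLpNorm (g n) 2 volume ≤ N2 := by
    intro n
    apply eLpNorm_mono
    intro x
    rw [hg_def]
    simp only [Real.norm_eq_abs, abs_mul]
    calc |gnChi n x| * |f x| ≤ 1 * |f x| := by
          apply mul_le_mul_of_nonneg_right _ (abs_nonneg _)
          rw [abs_of_nonneg (gnChi_nonneg n x)]
          exact gnChi_le_one n x
      _ = |f x| := one_mul _
  -- derivative bound
  have hgd : ∀ n x, ‖fderiv ℝ (g n) x‖ ≤ ‖fderiv ℝ f x‖ + (K/((n:ℝ)+1)) * ‖f x‖ := by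
    intro n x
    have hfd : fderiv ℝ (g n) x
        = gnChi n x • fderiv ℝ f x + f x • fderiv ℝ (gnChi n) x :=
      fderiv_fun_mul ((gnChi_contDiff n).differentiable one_ne_zero x) (hf.differentiable one_ne_zero x)
    rw [hfd]
    refine le_trans (norm_add_le _ _) ?_
    rw [norm_smul, norm_smul]
    have h1 : ‖gnChi n x‖ * ‖fderiv ℝ f x‖ ≤ 1 * ‖fderiv ℝ f x‖ := by
      apply mul_le_mul_of_nonneg_right _ (norm_nonneg _)
      rw [Real.norm_eq_abs, abs_of_nonneg (gnChi_nonneg n x)]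
      exact gnChi_le_one n x
    have h2 : ‖f x‖ * ‖fderiv ℝ (gnChi n) x‖ ≤ ‖f x‖ * (K/((n:ℝ)+1)) :=
      mul_le_mul_of_nonneg_left (hKb n x) (norm_nonneg _)
    calc ‖gnChi n x‖ * ‖fderiv ℝ f x‖ + ‖f x‖ * ‖fderiv ℝ (gnChi n) x‖
        ≤ 1 * ‖fderiv ℝ f x‖ + ‖f x‖ * (K/((n:ℝ)+1)) := add_le_add h1 h2
      _ = ‖fderiv ℝ f x‖ + (K/((n:ℝ)+1)) * ‖f x‖ := by ring
  -- L² bound on the derivative of g n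
  have hgd2 : ∀ n, eLpNorm (fun x => ‖fderiv ℝ (g n) x‖) 2 volume
      ≤ D2 + ENNReal.ofReal (K/((n:ℝ)+1)) * N2 := by
    intro n
    have hm1 : AEStronglyMeasurable (fun x : E2 => ‖fderiv ℝ f x‖) volume :=
      ((hf.continuous_fderiv one_ne_zero).norm).aestronglyMeasurable
    have hm2 : AEStronglyMeasurable (fun x : E2 => (K/((n:ℝ)+1)) * ‖f x‖) volume :=
      (continuous_const.mul hf.continuous.norm).aestronglyMeasurable
    calc eLpNorm (fun x => ‖fderiv ℝ (g n) x‖) 2 volume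
        ≤ eLpNorm (fun x => ‖fderiv ℝ f x‖ + (K/((n:ℝ)+1)) * ‖f x‖) 2 volume := by
          apply eLpNorm_mono
          intro x
          rw [norm_norm]
          exact le_trans (hgd n x) (le_abs_self _)
      _ ≤ eLpNorm (fun x => ‖fderiv ℝ f x‖) 2 volume
            + eLpNorm (fun x => (K/((n:ℝ)+1)) * ‖f x‖) 2 volume :=
          eLpNorm_add_le hm1 hm2 one_le_two
      _ = D2 + ENNReal.ofReal (K/((n:ℝ)+1)) * N2 := by
          congr 1
          have : (fun x : E2 => (K/((n:ℝ)+1)) * ‖f x‖)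
              = (K/((n:ℝ)+1)) • (fun x : E2 => ‖f x‖) := rfl
          rw [this, eLpNorm_const_smul, eLpNorm_norm,
            Real.enorm_eq_ofReal (by positivity), ← hN2_def]
  -- the key inequality for the truncations
  have hball : ∀ n : ℕ, eLpNorm f 4 (volume.restrict (ball (0:E2) ((n:ℝ)+1)))
      ≤ eLpNorm (g n) 4 volume := by
    intro n
    have heq : eLpNorm f 4 (volume.restrict (ball (0:E2) ((n:ℝ)+1)))
        = eLpNorm (g n) 4 (volume.restrict (ball (0:E2) ((n:ℝ)+1))) := by
      apply eLpNorm_congr_ae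
      filter_upwards [ae_restrict_mem measurableSet_ball] with x hx
      rw [mem_ball_zero_iff] at hx
      rw [hg_def]
      simp only
      rw [gnChi_one hx.le, one_mul]
    rw [heq]
    exact eLpNorm_mono_measure _ Measure.restrict_le_self
  set a : ℕ → ℝ≥0∞ := fun n => eLpNorm f 4 (volume.restrict (ball (0:E2) ((n:ℝ)+1)))
    with ha_def
  set X := 2 * (GNC : ℝ≥0∞) * N2 * D2 with hX_def
  set Y := 2 * (GNC : ℝ≥0∞) * N2 * N2 with hY_def
  have hXfin : X ≠ ∞ := by finiteness
  have hYfin : Y ≠ ∞ := by finiteness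
  have hkey : ∀ n, a n ^ (2:ℝ) ≤ X + Y * ENNReal.ofReal (K/((n:ℝ)+1)) := by
    intro n
    calc a n ^ (2:ℝ) ≤ eLpNorm (g n) 4 volume ^ (2:ℝ) := by
          gcongr
          exact hball n
      _ ≤ 2 * (GNC : ℝ≥0∞) * eLpNorm (g n) 2 volume
            * eLpNorm (fun x => ‖fderiv ℝ (g n) x‖) 2 volume :=
          gn_sq_bound (g n) (hgc n) (hgs n)
      _ ≤ 2 * (GNC : ℝ≥0∞) * N2 * (D2 + ENNReal.ofReal (K/((n:ℝ)+1)) * N2) := by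
          gcongr
          · exact hg2 n
          · exact hgd2 n
      _ = X + Y * ENNReal.ofReal (K/((n:ℝ)+1)) := by rw [hX_def, hY_def]; ring
  have ha_mono : Monotone a := by
    intro m n hmn
    apply eLpNorm_mono_measure
    apply Measure.restrict_mono _ le_rfl
    apply ball_subset_ball
    have : (m:ℝ) ≤ (n:ℝ) := Nat.cast_le.mpr hmn
    linarith
  -- monotone convergence : total integral is the sup of the truncated ones
  have htr4 : (4 : ℝ≥0∞).toReal = 4 := by norm_num
  set I : ℕ → ℝ≥0∞ :=
    fun n => ∫⁻ x in ball (0:E2) ((n:ℝ)+1), ((‖f x‖₊ : ℝ≥0∞)) ^ (4:ℝ) with hI_def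
  have haI : ∀ n, a n = I n ^ (1/4 : ℝ) := by
    intro n
    rw [ha_def]
    simp only
    rw [eLpNorm_eq_lintegral_rpow_enorm_toReal (by norm_num) (by norm_num), htr4]
    rfl
  have hmeas : Measurable fun x : E2 => ((‖f x‖₊ : ℝ≥0∞)) ^ (4:ℝ) :=
    hf.continuous.measurable.enorm.pow_const _
  have hItot : (∫⁻ x, ((‖f x‖₊ : ℝ≥0∞)) ^ (4:ℝ)) = ⨆ n, I n := by
    have hmono : Monotone (fun n : ℕ => (ball (0:E2) ((n:ℝ)+1)).indicator
        (fun x => ((‖f x‖₊ : ℝ≥0∞)) ^ (4:ℝ))) := by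
      intro m n hmn
      apply Set.indicator_le_indicator_of_subset
      · apply ball_subset_ball
        have : (m:ℝ) ≤ (n:ℝ) := Nat.cast_le.mpr hmn
        linarith
      · exact fun x => zero_le
    have hsup : ∀ x, (⨆ n : ℕ, (ball (0:E2) ((n:ℝ)+1)).indicator
        (fun x => ((‖f x‖₊ : ℝ≥0∞)) ^ (4:ℝ)) x) = ((‖f x‖₊ : ℝ≥0∞)) ^ (4:ℝ) := by
      intro x
      obtain ⟨n, hn⟩ := exists_nat_gt ‖x‖
      apply le_antisymm
      · exact iSup_le fun m => Set.indicator_le_self _ _ x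
      · refine le_iSup_of_le n ?_
        rw [Set.indicator_of_mem]
        rw [mem_ball_zero_iff]
        linarith
    calc (∫⁻ x, ((‖f x‖₊ : ℝ≥0∞)) ^ (4:ℝ))
        = ∫⁻ x, ⨆ n : ℕ, (ball (0:E2) ((n:ℝ)+1)).indicator
            (fun x => ((‖f x‖₊ : ℝ≥0∞)) ^ (4:ℝ)) x := by
          exact lintegral_congr fun x => (hsup x).symm
      _ = ⨆ n : ℕ, ∫⁻ x, (ball (0:E2) ((n:ℝ)+1)).indicator
            (fun x => ((‖f x‖₊ : ℝ≥0∞)) ^ (4:ℝ)) x :=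
          lintegral_iSup (fun n => hmeas.indicator measurableSet_ball) hmono
      _ = ⨆ n, I n := by
          refine iSup_congr fun n => ?_
          rw [lintegral_indicator measurableSet_ball]
  have hT : eLpNorm f 4 volume = (⨆ n, I n) ^ (1/4 : ℝ) := by
    rw [eLpNorm_eq_lintegral_rpow_enorm_toReal (by norm_num) (by norm_num), htr4, ← hItot]
    rfl
  have hT2 : eLpNorm f 4 volume ^ (2:ℝ) ≤ X := by
    apply ENNReal.le_of_forall_pos_le_add
    intro ε hε hXlt
    have hε0 : (0:ℝ) < ε := hε
    obtain ⟨N, hN⟩ := exists_nat_gt (Y.toReal * K / ε)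
    have hNpos : (0:ℝ) < (N:ℝ)+1 := by positivity
    have hsmall : Y * ENNReal.ofReal (K/((N:ℝ)+1)) ≤ (ε : ℝ≥0∞) := by
      have hY' : Y = ENNReal.ofReal Y.toReal := (ENNReal.ofReal_toReal hYfin).symm
      rw [hY', ← ENNReal.ofReal_mul ENNReal.toReal_nonneg,
        show ((ε:ℝ≥0∞)) = ENNReal.ofReal (ε:ℝ) from (ENNReal.ofReal_coe_nnreal).symm]
      apply ENNReal.ofReal_le_ofReal
      rw [div_lt_iff₀ hε0] at hN
      rw [mul_div_assoc', div_le_iff₀ hNpos]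
      nlinarith [ENNReal.toReal_nonneg (a := Y)]
    rw [hT, ← ENNReal.rpow_mul, show (1/4 : ℝ) * 2 = 1/2 by norm_num]
    have hsupI : (⨆ n, I n) ≤ (X + ε) ^ (2:ℝ) := by
      apply iSup_le
      intro n
      have h1 : I n = (a n) ^ (4:ℝ) := by rw [haI n, ← ENNReal.rpow_mul]; norm_num
      have h3 : a (max n N) ^ (2:ℝ) ≤ X + ε := by
        refine le_trans (hkey (max n N)) ?_
        refine add_le_add le_rfl (le_trans ?_ hsmall)
        have hcast : (N:ℝ) ≤ ((max n N : ℕ):ℝ) := Nat.cast_le.mpr (le_max_right _ _)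
        have hdivle : K / (((max n N : ℕ):ℝ)+1) ≤ K / ((N:ℝ)+1) :=
          div_le_div_of_nonneg_left hK0 hNpos (by linarith)
        exact mul_le_mul_right (ENNReal.ofReal_le_ofReal hdivle) _
      calc I n = ((a n) ^ (2:ℝ)) ^ (2:ℝ) := by
            rw [h1, ← ENNReal.rpow_mul]; norm_num
        _ ≤ ((a (max n N)) ^ (2:ℝ)) ^ (2:ℝ) :=
            ENNReal.rpow_le_rpow
              (ENNReal.rpow_le_rpow (ha_mono (le_max_left _ _)) (by norm_num)) (by norm_num)
        _ ≤ (X + ε) ^ (2:ℝ) := ENNReal.rpow_le_rpow h3 (by norm_num)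
    calc (⨆ n, I n) ^ (1/2 : ℝ) ≤ ((X + ε) ^ (2:ℝ)) ^ (1/2 : ℝ) :=
          ENNReal.rpow_le_rpow hsupI (by norm_num)
      _ = X + ε := by rw [← ENNReal.rpow_mul]; norm_num
  calc eLpNorm f 4 volume = (eLpNorm f 4 volume ^ (2:ℝ)) ^ (1/2 : ℝ) := by
        rw [← ENNReal.rpow_mul]; norm_num
    _ ≤ X ^ (1/2 : ℝ) := ENNReal.rpow_le_rpow hT2 (by norm_num)
    _ ≤ ((2 * (GNC : ℝ≥0∞) + 1) * N2 * D2) ^ (1/2 : ℝ) := by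
        apply ENNReal.rpow_le_rpow _ (by norm_num)
        rw [hX_def]
        gcongr
        exact le_self_add
    _ = (2 * (GNC : ℝ≥0∞) + 1) ^ (1/2 : ℝ) * N2 ^ (1/2 : ℝ) * D2 ^ (1/2 : ℝ) := by
        rw [ENNReal.mul_rpow_of_nonneg _ _ (by norm_num : (0:ℝ) ≤ 1/2),
          ENNReal.mul_rpow_of_nonneg _ _ (by norm_num : (0:ℝ) ≤ 1/2)]

end
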